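/- Let ω be irrational with continued fraction denominators (q_n), and for n ≥ 0 let α_n(ω) := min{ ‖ων‖ : ν ∈ ℤ, 0 < |ν| ≤ 2^n }. Then ∑_{n=0}^{∞} 2^{-n} log(1/α_n(ω)) < ∞ if and only if ∑_{k=0}^{∞} (1/q_k) log q_{k+1} < ∞. -/

import Mathlib

/-- Distance from a real number to the nearest integer. -/
noncomputable def distNearestInt (u : ℝ) : ℝ := ⨅ ν : ℤ, |u - (ν : ℝ)|

/-- The denominators `q_n` of the continued fraction expansion of `ω`. -/
noncomputable def cfDen (ω : ℝ) (n : ℕ) : ℝ := (GenContFract.of ω).dens n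

/-- `α_n(ω) = min { ‖ων‖ : ν ∈ ℤ, 0 < |ν| ≤ 2ⁿ }`, as in equation (5.3). -/
noncomputable def alphaMin (ω : ℝ) (n : ℕ) : ℝ :=
  sInf {r : ℝ | ∃ ν : ℤ, ν ≠ 0 ∧ |ν| ≤ 2 ^ n ∧ r = distNearestInt (ω * ν)}

open GenContFract

/-- integer partial denominator b_n of the continued fraction of ω -/
noncomputable def bI (ω : ℝ) (n : ℕ) : ℤ :=
  ((GenContFract.of ω).s.get? n).casesOn 1 (fun p => ⌊p.b⌋)

/-- integer denominators -/
noncomputable def Qd (ω : ℝ) : ℕ → ℤ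
  | 0 => 1
  | 1 => bI ω 0
  | (n+2) => bI ω (n+1) * Qd ω (n+1) + Qd ω n

/-- integer numerators -/
noncomputable def Pd (ω : ℝ) : ℕ → ℤ
  | 0 => ⌊ω⌋
  | 1 => bI ω 0 * ⌊ω⌋ + 1
  | (n+2) => bI ω (n+1) * Pd ω (n+1) + Pd ω n

section facts
variable {ω : ℝ} (hω : Irrational ω)

lemma not_term (hω : Irrational ω) (n : ℕ) : ¬(GenContFract.of ω).TerminatedAt n := by
  intro h
  have : (GenContFract.of ω).Terminates := ⟨n, h⟩
  rw [terminates_iff_rat] at this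
  obtain ⟨q, hq⟩ := this
  exact hω ⟨q, hq.symm⟩

lemma exists_s (hω : Irrational ω) (n : ℕ) :
    ∃ gp : GenContFract.Pair ℝ, (GenContFract.of ω).s.get? n = some gp ∧ gp.a = 1 ∧
      gp.b = (bI ω n : ℝ) ∧ 1 ≤ bI ω n := by
  have hnt := not_term hω n
  rw [terminatedAt_iff_s_none] at hnt
  obtain ⟨gp, hgp⟩ := Option.ne_none_iff_exists'.mp hnt
  have ha : gp.a = 1 := of_partNum_eq_one (partNum_eq_s_a hgp)
  have hbden : (GenContFract.of ω).partDens.get? n = some gp.b := partDen_eq_s_b hgp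
  obtain ⟨z, hz⟩ := GenContFract.exists_int_eq_of_partDen hbden
  have h1 : (1:ℝ) ≤ gp.b := of_one_le_get?_partDen hbden
  have hb : gp.b = (bI ω n : ℝ) := by
    rw [bI, hgp]; simp [hz]
  refine ⟨gp, hgp, ha, hb, ?_⟩
  have : (1:ℝ) ≤ (bI ω n : ℝ) := hb ▸ h1
  exact_mod_cast this

lemma Qd_cast (hω : Irrational ω) : ∀ n, ((Qd ω n : ℝ) = (GenContFract.of ω).dens n
    ∧ (Qd ω (n+1) : ℝ) = (GenContFract.of ω).dens (n+1)) := by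
  intro n
  induction n with
  | zero =>
    obtain ⟨gp, hgp, ha, hb, _⟩ := exists_s hω 0
    constructor
    · simp [Qd, zeroth_den_eq_one]
    · rw [first_den_eq hgp, hb]; simp [Qd]
  | succ n ih =>
    refine ⟨ih.2, ?_⟩
    obtain ⟨gp, hgp, ha, hb, _⟩ := exists_s hω (n+1)
    rw [dens_recurrence hgp rfl rfl]
    push_cast [Qd]
    rw [ih.1, ih.2, hb, ha]
    ring

lemma Pd_cast (hω : Irrational ω) : ∀ n, ((Pd ω n : ℝ) = (GenContFract.of ω).nums n
    ∧ (Pd ω (n+1) : ℝ) = (GenContFract.of ω).nums (n+1)) := by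
  intro n
  induction n with
  | zero =>
    obtain ⟨gp, hgp, ha, hb, _⟩ := exists_s hω 0
    constructor
    · simp [Pd, zeroth_num_eq_h, of_h_eq_floor]
    · rw [first_num_eq hgp, hb, ha, of_h_eq_floor]; push_cast [Pd]; ring
  | succ n ih =>
    refine ⟨ih.2, ?_⟩
    obtain ⟨gp, hgp, ha, hb, _⟩ := exists_s hω (n+1)
    rw [nums_recurrence hgp rfl rfl]
    push_cast [Pd]
    rw [ih.1, ih.2, hb, ha]
    ring

lemma Qd_one_le (hω : Irrational ω) : ∀ n, 1 ≤ Qd ω n ∧ Qd ω n ≤ Qd ω (n+1) := by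
  intro n
  induction n with
  | zero =>
    have h0 := (exists_s hω 0).choose_spec.2.2.2
    exact ⟨le_refl _, by simpa [Qd] using h0⟩
  | succ n ih =>
    have hb := (exists_s hω (n+1)).choose_spec.2.2.2
    refine ⟨le_trans ih.1 ih.2, ?_⟩
    show Qd ω (n+1) ≤ bI ω (n+1) * Qd ω (n+1) + Qd ω n
    nlinarith [ih.1, ih.2]

lemma Qd_pos (hω : Irrational ω) (n : ℕ) : 0 < Qd ω n := lt_of_lt_of_le zero_lt_one (Qd_one_le hω n).1

lemma Qd_mono (hω : Irrational ω) : Monotone (Qd ω) :=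
  monotone_nat_of_le_succ fun n => (Qd_one_le hω n).2

lemma Qd_two_step (hω : Irrational ω) (n : ℕ) : 2 * Qd ω n ≤ Qd ω (n+2) := by
  have hb := (exists_s hω (n+1)).choose_spec.2.2.2
  have h1 := (Qd_one_le hω n).1
  have h2 := (Qd_one_le hω n).2
  show 2 * Qd ω n ≤ bI ω (n+1) * Qd ω (n+1) + Qd ω n
  nlinarith

lemma Qd_growth (hω : Irrational ω) : ∀ n, (2:ℤ)^(n/2) ≤ Qd ω n := by
  intro n
  induction n using Nat.strong_induction_on with
  | _ n ih =>
    match n with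
    | 0 => simp [Qd]
    | 1 => simpa [Qd] using (Qd_one_le hω 1).1
    | (n+2) =>
      have := Qd_two_step hω n
      have h := ih n (by omega)
      calc (2:ℤ)^((n+2)/2) = 2 * 2^(n/2) := by
            rw [show (n+2)/2 = n/2 + 1 by omega]; ring
        _ ≤ 2 * Qd ω n := by linarith
        _ ≤ Qd ω (n+2) := Qd_two_step hω n

lemma det_eq (hω : Irrational ω) : ∀ n, Pd ω n * Qd ω (n+1) - Pd ω (n+1) * Qd ω n = (-1)^(n+1) := by
  intro n
  induction n with
  | zero => simp [Pd, Qd]; ring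
  | succ n ih =>
    show Pd ω (n+1) * (bI ω (n+1) * Qd ω (n+1) + Qd ω n) -
      (bI ω (n+1) * Pd ω (n+1) + Pd ω n) * Qd ω (n+1) = _
    have : Pd ω (n+1) * Qd ω n - Pd ω n * Qd ω (n+1) = -(-1)^(n+1) := by linarith
    calc Pd ω (n+1) * (bI ω (n+1) * Qd ω (n+1) + Qd ω n) -
        (bI ω (n+1) * Pd ω (n+1) + Pd ω n) * Qd ω (n+1)
        = Pd ω (n+1) * Qd ω n - Pd ω n * Qd ω (n+1) := by ring
      _ = -(-1)^(n+1) := this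
      _ = (-1)^(n+2) := by ring

end facts

noncomputable def ee (ω : ℝ) (k : ℕ) : ℝ := ω * Qd ω k - Pd ω k

section err
variable {ω : ℝ}

lemma stream_some (hω : Irrational ω) (k : ℕ) :
    ∃ ifp, GenContFract.IntFractPair.stream ω k = some ifp := by
  cases k with
  | zero => exact ⟨_, GenContFract.IntFractPair.stream_zero ω⟩
  | succ k =>
    have := not_term hω k
    rw [of_terminatedAt_n_iff_succ_nth_intFractPair_stream_eq_none] at this
    exact Option.ne_none_iff_exists'.mp this

lemma fr_pos (hω : Irrational ω) {k : ℕ} {ifp : GenContFract.IntFractPair ℝ}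
    (h : GenContFract.IntFractPair.stream ω k = some ifp) : 0 < ifp.fr := by
  rcases (GenContFract.IntFractPair.nth_stream_fr_nonneg h).lt_or_eq with h' | h'
  · exact h'
  · exfalso
    have h0 : GenContFract.IntFractPair.stream ω (k+1) = none :=
      GenContFract.IntFractPair.stream_eq_none_of_fr_eq_zero h h'.symm
    obtain ⟨ifp', hifp'⟩ := stream_some hω (k+1)
    rw [h0] at hifp'; exact Option.some_ne_none _ hifp'.symm

lemma fr_inv_bounds (hω : Irrational ω) {k : ℕ} {ifp : GenContFract.IntFractPair ℝ}
    (h : GenContFract.IntFractPair.stream ω k = some ifp) :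
    (bI ω k : ℝ) ≤ ifp.fr⁻¹ ∧ ifp.fr⁻¹ < (bI ω k : ℝ) + 1 := by
  have hfr := fr_pos hω h
  have hsucc : GenContFract.IntFractPair.stream ω (k+1) =
      some (GenContFract.IntFractPair.of ifp.fr⁻¹) :=
    GenContFract.IntFractPair.stream_succ_of_some h (ne_of_gt hfr)
  have hs : (GenContFract.of ω).s.get? k =
      some ⟨1, ((GenContFract.IntFractPair.of ifp.fr⁻¹).b : ℝ)⟩ :=
    get?_of_eq_some_of_succ_get?_intFractPair_stream hsucc
  obtain ⟨gp, hgp, ha, hb, hb1⟩ := exists_s hω k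
  rw [hgp] at hs
  have : gp.b = ((GenContFract.IntFractPair.of ifp.fr⁻¹).b : ℝ) := by
    injection hs with h'; rw [h']
  have hbi : (bI ω k : ℝ) = (⌊ifp.fr⁻¹⌋ : ℝ) := by
    rw [← hb, this]; rfl
  constructor
  · rw [hbi]; exact Int.floor_le _
  · rw [hbi]; exact Int.lt_floor_add_one _

lemma ee_key (hω : Irrational ω) (k : ℕ) :
    (0 < (-1:ℝ)^k * ee ω k) ∧ |ee ω k| ≤ 1 / (Qd ω (k+1) : ℝ) ∧
      1 / (2 * (Qd ω (k+1) : ℝ)) ≤ |ee ω k| := by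
  obtain ⟨ifp, hifp⟩ := stream_some hω k
  have hsub := GenContFract.sub_convs_eq hifp
  simp only at hsub
  have hfr := fr_pos hω hifp
  rw [if_neg (ne_of_gt hfr)] at hsub
  set g := GenContFract.of ω with hg
  set B := (g.contsAux (k + 1)).b with hB
  set pB := (g.contsAux k).b with hpB
  have hdensk : (Qd ω k : ℝ) = g.dens k := (Qd_cast hω k).1
  have hdensk1 : (Qd ω (k+1) : ℝ) = g.dens (k+1) := (Qd_cast hω k).2
  have hBd : B = g.dens k := by
    rw [den_eq_conts_b, nth_cont_eq_succ_nth_contAux]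
  have hBpos : 0 < B := by
    rw [hBd, ← hdensk]; exact_mod_cast Qd_pos hω k
  have hpB0 : 0 ≤ pB := zero_le_of_contsAux_b
  obtain ⟨gp, hgp, ha, hb, hb1⟩ := exists_s hω k
  have hrec : g.dens (k+1) = (bI ω k : ℝ) * B + pB := by
    have h2 := contsAux_recurrence (g := g) hgp rfl rfl
    rw [den_eq_conts_b, nth_cont_eq_succ_nth_contAux, h2]
    simp [ha, hb]; rfl
  obtain ⟨hfl, hfu⟩ := fr_inv_bounds hω hifp
  have hfrinv : 0 < ifp.fr⁻¹ := inv_pos.mpr hfr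
  have hD1 : g.dens k * g.dens (k+1) ≤ B * (ifp.fr⁻¹ * B + pB) := by
    rw [← hBd, hrec]
    have h1 : (bI ω k : ℝ) * B + pB ≤ ifp.fr⁻¹ * B + pB := by
      have := mul_le_mul_of_nonneg_right hfl hBpos.le
      linarith
    exact mul_le_mul_of_nonneg_left h1 hBpos.le
  have hD2 : B * (ifp.fr⁻¹ * B + pB) ≤ 2 * (g.dens k * g.dens (k+1)) := by
    rw [← hBd, hrec]
    have h2 : B ≤ (bI ω k : ℝ) * B + pB := by
      have : (1:ℝ) ≤ (bI ω k : ℝ) := by exact_mod_cast hb1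
      nlinarith
    have h1 : ifp.fr⁻¹ * B + pB ≤ 2 * ((bI ω k : ℝ) * B + pB) := by
      have := mul_le_mul_of_nonneg_right hfu.le hBpos.le
      linarith
    calc B * (ifp.fr⁻¹ * B + pB) ≤ B * (2 * ((bI ω k : ℝ) * B + pB)) :=
          mul_le_mul_of_nonneg_left h1 hBpos.le
      _ = 2 * (B * ((bI ω k : ℝ) * B + pB)) := by ring
  have hDpos : 0 < B * (ifp.fr⁻¹ * B + pB) := by
    have : 0 < ifp.fr⁻¹ * B + pB := by nlinarith
    exact mul_pos hBpos this
  have hconv : g.convs k = (Pd ω k : ℝ) / (Qd ω k : ℝ) := by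
    rw [conv_eq_num_div_den, ← (Pd_cast hω k).1, ← hdensk]
  have hQpos : (0:ℝ) < (Qd ω k : ℝ) := by exact_mod_cast Qd_pos hω k
  have hQ1pos : (0:ℝ) < (Qd ω (k+1) : ℝ) := by exact_mod_cast Qd_pos hω (k+1)
  have hQne : (Qd ω k : ℝ) ≠ 0 := ne_of_gt hQpos
  have he : ee ω k = (Qd ω k : ℝ) * (ω - g.convs k) := by
    rw [hconv, ee]; field_simp
  have hsq : ((-1:ℝ))^k * ((-1:ℝ))^k = 1 := by
    rw [← pow_add]; exact Even.neg_one_pow ⟨k, rfl⟩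
  refine ⟨?_, ?_, ?_⟩
  · rw [he, hsub,
      show ((-1:ℝ))^k * ((Qd ω k : ℝ) * ((-1)^k / (B * (ifp.fr⁻¹ * B + pB)))) =
        (Qd ω k : ℝ) * (((-1:ℝ)^k * (-1:ℝ)^k) / (B * (ifp.fr⁻¹ * B + pB))) from by ring,
      hsq]
    exact mul_pos hQpos (div_pos one_pos hDpos)
  all_goals {
    have habs : |ee ω k| = (Qd ω k : ℝ) / (B * (ifp.fr⁻¹ * B + pB)) := by
      rw [he, abs_mul, hsub, abs_div, abs_neg_one_pow, abs_of_pos hDpos, abs_of_pos hQpos,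
        mul_one_div]
    rw [habs, div_le_div_iff₀ (by positivity) (by positivity)]
    first
    | · -- upper bound : Qd k * Qd (k+1) ≤ 1 * D
        have h3 : (Qd ω k:ℝ) * (Qd ω (k+1):ℝ) ≤ B * (ifp.fr⁻¹ * B + pB) := by
          rw [hdensk, hdensk1]; exact hD1
        linarith
    | · have h3 : B * (ifp.fr⁻¹ * B + pB) ≤ 2 * ((Qd ω k:ℝ) * (Qd ω (k+1):ℝ)) := by
          rw [hdensk, hdensk1]; exact hD2
        nlinarith
  }

end err

lemma abs_le_abs_add_of_mul_nonneg {a b : ℝ} (h : 0 ≤ a * b) : |a| ≤ |a + b| := by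
  have h2 : a^2 ≤ (a+b)^2 := by nlinarith
  have h3 : |a|^2 ≤ |a+b|^2 := by rwa [sq_abs, sq_abs]
  exact (pow_le_pow_iff_left₀ (abs_nonneg _) (abs_nonneg _) two_ne_zero).mp h3

section ba
variable {ω : ℝ}

lemma best_approx (hω : Irrational ω) (k : ℕ) {ν : ℤ} (hν : ν ≠ 0)
    (hlt : |ν| < Qd ω (k+1)) (p : ℤ) : |ee ω k| ≤ |ω * ν - p| := by
  set s : ℤ := (-1)^(k+1) with hs
  have hd := det_eq hω k
  have hss : s * s = 1 := by
    rw [hs, ← pow_add]; exact Even.neg_one_pow ⟨k+1, rfl⟩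
  set a : ℤ := s * (p * Qd ω (k+1) - ν * Pd ω (k+1)) with ha
  set b : ℤ := s * (ν * Pd ω k - p * Qd ω k) with hb
  have h1 : a * Qd ω k + b * Qd ω (k+1) = ν := by
    rw [ha, hb]; linear_combination (s * ν) * hd + (ν : ℤ) * hss
  have h2 : a * Pd ω k + b * Pd ω (k+1) = p := by
    rw [ha, hb]; linear_combination (s * p) * hd + (p : ℤ) * hss
  have hdecomp : ω * ν - p = (a:ℝ) * ee ω k + (b:ℝ) * ee ω (k+1) := by
    have c1 : ((a * Qd ω k + b * Qd ω (k+1) : ℤ) : ℝ) = (ν : ℝ) := by rw [h1]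
    have c2 : ((a * Pd ω k + b * Pd ω (k+1) : ℤ) : ℝ) = (p : ℝ) := by rw [h2]
    push_cast at c1 c2
    simp only [ee]
    rw [← c1, ← c2]; ring
  have hQk := Qd_pos hω k
  have hQk1 := Qd_pos hω (k+1)
  have hane : a ≠ 0 := by
    intro ha0
    rw [ha0, zero_mul, zero_add] at h1
    rcases eq_or_ne b 0 with hb0 | hb0
    · rw [hb0] at h1; simp at h1; exact hν h1.symm
    · have : Qd ω (k+1) ≤ |ν| := by
        rw [← h1, abs_mul, abs_of_pos hQk1]
        have : 1 ≤ |b| := Int.one_le_abs hb0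
        nlinarith [abs_nonneg b]
      omega
  have hmul : 0 ≤ ((a:ℝ) * ee ω k) * ((b:ℝ) * ee ω (k+1)) := by
    rcases eq_or_ne b 0 with hb0 | hb0
    · rw [hb0]; simp
    · -- both nonzero; show a * b < 0
      have hab : a * b < 0 := by
        rcases lt_trichotomy (a*b) 0 with h | h | h
        · exact h
        · exact absurd (mul_eq_zero.mp h) (by push_neg; exact ⟨hane, hb0⟩)
        · -- same sign : |ν| ≥ Qd (k+1), contradiction
          exfalso
          have : Qd ω (k+1) ≤ |ν| := by
            rw [← h1]
            rcases lt_trichotomy a 0 with haneg | h0 | hapos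
            · have hbneg : b < 0 := by nlinarith
              rw [abs_of_nonpos (by nlinarith)]
              nlinarith
            · exact absurd h0 hane
            · have hbpos : 0 < b := by nlinarith
              rw [abs_of_pos (by nlinarith)]
              nlinarith
          omega
      -- ee k * ee (k+1) < 0
      have he1 := (ee_key hω k).1
      have he2 := (ee_key hω (k+1)).1
      have hsq : ((-1:ℝ))^k * ((-1:ℝ))^(k+1) = -1 := by
        rw [← pow_add]; rw [Odd.neg_one_pow ⟨k, by ring⟩]
      have hee : ee ω k * ee ω (k+1) < 0 := by nlinarith
      have habR : (a:ℝ) * (b:ℝ) < 0 := by exact_mod_cast hab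
      nlinarith
  calc |ee ω k| ≤ |(a:ℝ)| * |ee ω k| := by
        have : (1:ℝ) ≤ |(a:ℝ)| := by
          have := Int.one_le_abs hane
          exact_mod_cast this
        nlinarith [abs_nonneg (ee ω k)]
    _ = |(a:ℝ) * ee ω k| := (abs_mul _ _).symm
    _ ≤ |(a:ℝ) * ee ω k + (b:ℝ) * ee ω (k+1)| := abs_le_abs_add_of_mul_nonneg hmul
    _ = |ω * ν - p| := by rw [hdecomp]

end ba

lemma dni_nonneg (u : ℝ) : 0 ≤ distNearestInt u :=
  le_ciInf fun _ => abs_nonneg _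

lemma dni_le (u : ℝ) (p : ℤ) : distNearestInt u ≤ |u - p| :=
  ciInf_le ⟨0, fun _ ⟨_, h⟩ => h ▸ abs_nonneg _⟩ p

lemma ge_dni (u : ℝ) {c : ℝ} (h : ∀ p : ℤ, c ≤ |u - p|) : c ≤ distNearestInt u :=
  le_ciInf h

/-- largest k with q_k ≤ 2^n -/
noncomputable def Kn (ω : ℝ) (n : ℕ) : ℕ :=
  Nat.findGreatest (fun k => Qd ω k ≤ 2^n) (2*n+2)

lemma Qd_zero (ω : ℝ) : Qd ω 0 = 1 := rfl

lemma exists_pow_ge (z : ℤ) : ∃ n : ℕ, z ≤ 2^n := by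
  refine ⟨z.toNat, ?_⟩
  rcases le_or_gt z 0 with h | h
  · exact le_trans h (by positivity)
  · have h1 : z = (z.toNat : ℤ) := (Int.toNat_of_nonneg h.le).symm
    have h2 : z.toNat < 2^z.toNat := Nat.lt_two_pow_self (n := z.toNat)
    calc z = (z.toNat : ℤ) := h1
      _ ≤ ((2^z.toNat : ℕ) : ℤ) := by exact_mod_cast h2.le
      _ = 2^z.toNat := by push_cast; ring

noncomputable def nk (ω : ℝ) (k : ℕ) : ℕ := Nat.find (exists_pow_ge (Qd ω k))

section kn
variable {ω : ℝ}

lemma nk_spec (k : ℕ) : Qd ω k ≤ 2^(nk ω k) := Nat.find_spec (exists_pow_ge (Qd ω k))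

lemma nk_le_iff {k n : ℕ} : nk ω k ≤ n ↔ Qd ω k ≤ 2^n := by
  constructor
  · intro h
    calc Qd ω k ≤ 2^(nk ω k) := nk_spec k
      _ ≤ 2^n := pow_le_pow_right₀ one_le_two h
  · intro h; exact Nat.find_min' _ h

lemma nk_mono (hω : Irrational ω) : Monotone (nk ω) := by
  intro k k' h
  exact nk_le_iff.mpr (le_trans (Qd_mono hω h) (nk_spec k'))

lemma pow_nk_le (hω : Irrational ω) (k : ℕ) : (2:ℤ)^(nk ω k) ≤ 2 * Qd ω k := by
  cases h : nk ω k with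
  | zero => have := Qd_pos hω k; simpa using by omega
  | succ m =>
    have hmin : ¬(Qd ω k ≤ 2^m) := by
      have := Nat.find_min (exists_pow_ge (Qd ω k)) (by omega : m < nk ω k)
      exact this
    push_neg at hmin
    calc (2:ℤ)^(m+1) = 2 * 2^m := by ring
      _ ≤ 2 * Qd ω k := by omega

lemma Kn_spec1 (n : ℕ) : Qd ω (Kn ω n) ≤ 2^n := by
  have h0 : Qd ω 0 ≤ 2^n := by rw [Qd_zero]; exact one_le_pow₀ one_le_two
  exact Nat.findGreatest_spec (P := fun k => Qd ω k ≤ 2^n) (Nat.zero_le _) h0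

lemma big_k_not (hω : Irrational ω) {n k : ℕ} (h : 2*n+2 < k) : ¬(Qd ω k ≤ 2^n) := by
  push_neg
  calc (2:ℤ)^n < 2^(n+1) := pow_lt_pow_right₀ one_lt_two (Nat.lt_succ_self n)
    _ ≤ 2^(k/2) := pow_le_pow_right₀ one_le_two (by omega)
    _ ≤ Qd ω k := Qd_growth hω k

lemma Kn_spec2 (hω : Irrational ω) (n : ℕ) : 2^n < Qd ω (Kn ω n + 1) := by
  rcases le_or_gt (Kn ω n + 1) (2*n+2) with h | h
  · have := Nat.findGreatest_is_greatest (Nat.lt_succ_self (Kn ω n)) h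
    simpa [Kn] using by push_neg at this; exact this
  · have := big_k_not hω (by omega : 2*n+2 < Kn ω n + 1)
    push_neg at this; exact this

lemma nk_Kn_le (hω : Irrational ω) (n : ℕ) : nk ω (Kn ω n) ≤ n := nk_le_iff.mpr (Kn_spec1 n)

lemma lt_nk_Kn (hω : Irrational ω) (n : ℕ) : n < nk ω (Kn ω n + 1) := by
  by_contra h
  push_neg at h
  exact absurd (nk_le_iff.mp h) (not_le.mpr (Kn_spec2 hω n))

lemma Kn_of_nk (hω : Irrational ω) {k : ℕ} (hgood : nk ω k < nk ω (k+1)) :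
    Kn ω (nk ω k) = k := by
  apply le_antisymm
  · by_contra h
    push_neg at h
    have h1 : Qd ω (k+1) ≤ Qd ω (Kn ω (nk ω k)) := Qd_mono hω h
    have h2 : Qd ω (k+1) ≤ 2^(nk ω k) := le_trans h1 (Kn_spec1 _)
    exact absurd (nk_le_iff.mpr h2) (not_le.mpr hgood)
  · have hb : k/2 ≤ nk ω k := by
      have h1 : (2:ℤ)^(k/2) ≤ 2^(nk ω k) := le_trans (Qd_growth hω k) (nk_spec k)
      exact (pow_le_pow_iff_right₀ one_lt_two).mp h1
    exact Nat.le_findGreatest (by omega) (nk_spec k)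

lemma alpha_bounds (hω : Irrational ω) (n : ℕ) :
    1 / (2 * (Qd ω (Kn ω n + 1) : ℝ)) ≤ alphaMin ω n ∧
      alphaMin ω n ≤ 1 / (Qd ω (Kn ω n + 1) : ℝ) := by
  set S := {r : ℝ | ∃ ν : ℤ, ν ≠ 0 ∧ |ν| ≤ 2 ^ n ∧ r = distNearestInt (ω * ν)} with hS
  have hQ := Qd_pos hω (Kn ω n)
  have hmem : distNearestInt (ω * (Qd ω (Kn ω n) : ℝ)) ∈ S := by
    refine ⟨Qd ω (Kn ω n), ne_of_gt hQ, ?_, rfl⟩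
    rw [abs_of_pos hQ]; exact Kn_spec1 n
  have hlb : ∀ r ∈ S, 1 / (2 * (Qd ω (Kn ω n + 1) : ℝ)) ≤ r := by
    rintro r ⟨ν, hν, hνle, rfl⟩
    apply ge_dni
    intro p
    have hba := best_approx hω (Kn ω n) hν (lt_of_le_of_lt hνle (Kn_spec2 hω n)) p
    exact le_trans (ee_key hω (Kn ω n)).2.2 hba
  constructor
  · exact le_csInf ⟨_, hmem⟩ hlb
  · calc alphaMin ω n ≤ distNearestInt (ω * (Qd ω (Kn ω n) : ℝ)) :=
        csInf_le ⟨1 / (2 * (Qd ω (Kn ω n + 1) : ℝ)), hlb⟩ hmem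
      _ ≤ |ω * (Qd ω (Kn ω n) : ℝ) - (Pd ω (Kn ω n) : ℝ)| := dni_le _ _
      _ ≤ 1 / (Qd ω (Kn ω n + 1) : ℝ) := (ee_key hω (Kn ω n)).2.1

end kn

section summ
variable {ω : ℝ}

-- real versions
lemma QdR_one_le (hω : Irrational ω) (k : ℕ) : (1:ℝ) ≤ (Qd ω k : ℝ) := by
  exact_mod_cast (Qd_one_le hω k).1
lemma QdR_pos (hω : Irrational ω) (k : ℕ) : (0:ℝ) < (Qd ω k : ℝ) := by
  exact_mod_cast Qd_pos hω k
lemma logQd_nonneg (hω : Irrational ω) (k : ℕ) : 0 ≤ Real.log (Qd ω k : ℝ) :=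
  Real.log_nonneg (QdR_one_le hω k)

noncomputable def S2 (ω : ℝ) (n : ℕ) : ℝ := (1/2)^n * Real.log (Qd ω (Kn ω n + 1) : ℝ)
noncomputable def Tf (ω : ℝ) (k : ℕ) : ℝ := 1 / (Qd ω k : ℝ) * Real.log (Qd ω (k+1) : ℝ)

lemma S2_nonneg (hω : Irrational ω) (n : ℕ) : 0 ≤ S2 ω n :=
  mul_nonneg (by positivity) (logQd_nonneg hω (Kn ω n + 1))

lemma Tf_nonneg (hω : Irrational ω) (k : ℕ) : 0 ≤ Tf ω k := by
  have h2 := QdR_pos hω k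
  exact mul_nonneg (by positivity) (logQd_nonneg hω (k+1))

lemma half_pow_nk_le (hω : Irrational ω) (k : ℕ) :
    ((1:ℝ)/2)^(nk ω k) ≤ 1 / (Qd ω k : ℝ) := by
  rw [div_pow, one_pow]
  apply one_div_le_one_div_of_le (QdR_pos hω k)
  have h := nk_spec (ω := ω) k
  calc (Qd ω k : ℝ) ≤ ((2^(nk ω k) : ℤ) : ℝ) := by exact_mod_cast h
    _ = 2^(nk ω k) := by push_cast; ring

lemma one_div_Qd_le (hω : Irrational ω) (k : ℕ) :
    1 / (Qd ω k : ℝ) ≤ 2 * ((1:ℝ)/2)^(nk ω k) := by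
  have hR : (2:ℝ)^(nk ω k) ≤ 2 * (Qd ω k : ℝ) := by exact_mod_cast pow_nk_le hω k
  have hQ := QdR_pos hω k
  have h2 : (0:ℝ) < 2^(nk ω k) := by positivity
  have key : 1 / (Qd ω k : ℝ) ≤ 2 / 2^(nk ω k) := by
    rw [div_le_div_iff₀ hQ h2]; nlinarith
  calc 1 / (Qd ω k : ℝ) ≤ 2 / 2^(nk ω k) := key
    _ = 2 * ((1:ℝ)/2)^(nk ω k) := by rw [div_pow, one_pow]; ring

lemma summable_pow_half_idx {r : ℝ} (hr0 : 0 < r) (hr1 : r < 1) :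
    Summable (fun k : ℕ => r^(k/2)) := by
  set d := Real.sqrt r with hd
  have hd0 : 0 < d := Real.sqrt_pos.mpr hr0
  have hd1 : d < 1 := by
    rw [hd, show (1:ℝ) = Real.sqrt 1 by simp]
    exact Real.sqrt_lt_sqrt hr0.le hr1
  have hdd : d^2 = r := Real.sq_sqrt hr0.le
  refine Summable.of_nonneg_of_le (fun k => by positivity) (fun k => ?_)
    ((summable_geometric_of_lt_one hd0.le hd1).mul_left (1/d))
  have h1 : r^(k/2) = d^(2*(k/2)) := by rw [pow_mul, hdd]
  rw [h1]
  have h2 : d^(2*(k/2)) ≤ d^(k-1) := pow_le_pow_of_le_one hd0.le hd1.le (by omega)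
  refine h2.trans ?_
  rcases Nat.eq_zero_or_pos k with hk | hk
  · subst hk
    simp only [Nat.zero_sub, pow_zero, mul_one]
    exact one_le_one_div hd0 hd1.le
  · have heq : d^k = d^(k-1) * d := by rw [← pow_succ]; congr 1; omega
    have : (1/d) * d^k = d^(k-1) := by rw [heq]; field_simp
    rw [this]

noncomputable def junk (ω : ℝ) (k : ℕ) : ℝ := 1 / (Qd ω k : ℝ) * Real.log (2 * (Qd ω k : ℝ))

lemma junk_nonneg (hω : Irrational ω) (k : ℕ) : 0 ≤ junk ω k := by
  have h1 : (1:ℝ) ≤ 2 * (Qd ω k : ℝ) := by nlinarith [QdR_one_le hω k]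
  have h2 := Real.log_nonneg h1
  have h3 := QdR_pos hω k
  exact mul_nonneg (by positivity) h2

lemma summable_junk (hω : Irrational ω) : Summable (junk ω) := by
  have hbound : ∀ k, junk ω k ≤
      Real.log 2 * ((1:ℝ)/2)^(k/2) + 2 * ((Real.sqrt 2)⁻¹)^(k/2) := by
    intro k
    have hQ1 := QdR_one_le hω k
    have hQ0 := QdR_pos hω k
    have hlog : Real.log (2 * (Qd ω k : ℝ)) = Real.log 2 + Real.log (Qd ω k : ℝ) :=
      Real.log_mul two_ne_zero (ne_of_gt hQ0)
    have hgrow : ((2:ℝ))^(k/2) ≤ (Qd ω k : ℝ) := by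
      have := Qd_growth hω k
      calc ((2:ℝ))^(k/2) = (((2:ℤ)^(k/2) : ℤ) : ℝ) := by push_cast; ring
        _ ≤ (Qd ω k : ℝ) := by exact_mod_cast this
    have h1 : 1 / (Qd ω k : ℝ) ≤ ((1:ℝ)/2)^(k/2) := by
      rw [div_pow, one_pow]
      exact one_div_le_one_div_of_le (by positivity) hgrow
    have hsq : Real.sqrt (Qd ω k : ℝ) * Real.sqrt (Qd ω k : ℝ) = (Qd ω k : ℝ) :=
      Real.mul_self_sqrt hQ0.le
    have hs0 : 0 < Real.sqrt (Qd ω k : ℝ) := Real.sqrt_pos.mpr hQ0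
    have hlogle : Real.log (Qd ω k : ℝ) ≤ 2 * Real.sqrt (Qd ω k : ℝ) := by
      have h3 : Real.log (Qd ω k : ℝ) = 2 * Real.log (Real.sqrt (Qd ω k : ℝ)) := by
        rw [Real.log_sqrt hQ0.le]; ring
      rw [h3]
      have h4 : Real.log (Real.sqrt (Qd ω k : ℝ)) ≤ Real.sqrt (Qd ω k : ℝ) - 1 :=
        Real.log_le_sub_one_of_pos hs0
      nlinarith
    have h2 : 1 / (Qd ω k : ℝ) * Real.log (Qd ω k : ℝ) ≤ 2 * ((Real.sqrt 2)⁻¹)^(k/2) := by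
      have e1 : (Real.sqrt (Qd ω k : ℝ)) / (Qd ω k : ℝ) = 1 / Real.sqrt (Qd ω k : ℝ) := by
        rw [← hsq]; field_simp; rw [Real.sqrt_sq hs0.le]
      have hstep : 1 / (Qd ω k : ℝ) * Real.log (Qd ω k : ℝ) ≤ 2 / Real.sqrt (Qd ω k : ℝ) := by
        calc 1 / (Qd ω k : ℝ) * Real.log (Qd ω k : ℝ)
            ≤ 1 / (Qd ω k : ℝ) * (2 * Real.sqrt (Qd ω k : ℝ)) :=
              mul_le_mul_of_nonneg_left hlogle (by positivity)
          _ = 2 * (Real.sqrt (Qd ω k : ℝ) / (Qd ω k : ℝ)) := by ring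
          _ = 2 * (1 / Real.sqrt (Qd ω k : ℝ)) := by rw [e1]
          _ = 2 / Real.sqrt (Qd ω k : ℝ) := by ring
      refine hstep.trans ?_
      rw [div_eq_mul_inv]
      apply mul_le_mul_of_nonneg_left ?_ (by norm_num : (0:ℝ) ≤ 2)
      rw [inv_pow, inv_le_inv₀ hs0 (by positivity)]
      rw [Real.le_sqrt (by positivity)]
      calc ((Real.sqrt 2)^(k/2))^2 = ((Real.sqrt 2)^2)^(k/2) := by
            rw [← pow_mul, ← pow_mul, Nat.mul_comm]
        _ = 2^(k/2) := by rw [Real.sq_sqrt (by norm_num : (0:ℝ) ≤ 2)]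
        _ ≤ (Qd ω k : ℝ) := hgrow
      positivity
    calc junk ω k = Real.log 2 * (1 / (Qd ω k : ℝ)) + 1 / (Qd ω k : ℝ) * Real.log (Qd ω k : ℝ) := by
          rw [junk, hlog]; ring
      _ ≤ Real.log 2 * ((1:ℝ)/2)^(k/2) + 2 * ((Real.sqrt 2)⁻¹)^(k/2) :=
          add_le_add (mul_le_mul_of_nonneg_left h1 (Real.log_nonneg one_le_two)) h2
  apply Summable.of_nonneg_of_le (junk_nonneg hω) hbound
  apply Summable.add
  · exact (summable_pow_half_idx (by norm_num) (by norm_num)).mul_left _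
  · refine ((summable_pow_half_idx ?_ ?_).mul_left _)
    · rw [inv_pos]; exact Real.sqrt_pos.mpr two_pos
    · rw [inv_lt_one_iff₀]
      right
      rw [show (1:ℝ) = Real.sqrt 1 by simp]
      exact Real.sqrt_lt_sqrt (by norm_num) one_lt_two

lemma T_of_S2 (hω : Irrational ω) (hS2 : Summable (S2 ω)) : Summable (Tf ω) := by
  set s : Set ℕ := {k | nk ω k < nk ω (k+1)} with hs
  set f : ℕ → ℝ := fun k => 2 * S2 ω (nk ω k) with hf
  have hinj : Function.Injective (fun k : s => nk ω (k:ℕ)) := by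
    rintro ⟨k, hk⟩ ⟨k', hk'⟩ h
    have h2 : nk ω k = nk ω k' := h
    have hk2 : nk ω k < nk ω (k+1) := hk
    have hk2' : nk ω k' < nk ω (k'+1) := hk'
    apply Subtype.ext
    show k = k'
    by_contra hne
    rcases Nat.lt_or_ge k k' with hlt | hge
    · have := nk_mono hω (show k+1 ≤ k' by omega)
      omega
    · have := nk_mono hω (show k'+1 ≤ k by omega)
      omega
  have hsub : Summable (f ∘ (Subtype.val : s → ℕ)) := by
    have : Summable ((fun m => 2 * S2 ω m) ∘ (fun k : s => nk ω (k:ℕ))) :=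
      (hS2.mul_left 2).comp_injective hinj
    exact this
  have hind : Summable (s.indicator f) := summable_subtype_iff_indicator.mp hsub
  apply Summable.of_nonneg_of_le (Tf_nonneg hω) ?_ (hind.add (summable_junk hω))
  intro k
  by_cases hk : k ∈ s
  · have heq : Set.indicator s f k = 2 * S2 ω (nk ω k) := Set.indicator_of_mem hk _
    simp only [Pi.add_apply, heq]
    have hKn : Kn ω (nk ω k) = k := Kn_of_nk hω hk
    have hrw : 2 * S2 ω (nk ω k) = 2 * ((1/2)^(nk ω k) * Real.log (Qd ω (k+1) : ℝ)) := by
      rw [S2, hKn]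
    rw [hrw]
    have h1 : 1 / (Qd ω k : ℝ) ≤ 2 * ((1:ℝ)/2)^(nk ω k) := one_div_Qd_le hω k
    have h2 := logQd_nonneg hω (k+1)
    have h3 : Tf ω k ≤ 2 * ((1/2)^(nk ω k) * Real.log (Qd ω (k+1) : ℝ)) := by
      rw [Tf]
      calc 1 / (Qd ω k : ℝ) * Real.log (Qd ω (k+1) : ℝ)
          ≤ (2 * ((1:ℝ)/2)^(nk ω k)) * Real.log (Qd ω (k+1) : ℝ) :=
            mul_le_mul_of_nonneg_right h1 h2
        _ = 2 * ((1/2)^(nk ω k) * Real.log (Qd ω (k+1) : ℝ)) := by ring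
    have := junk_nonneg hω k
    linarith
  · have heq : Set.indicator s f k = 0 := Set.indicator_of_notMem hk _
    simp only [Pi.add_apply, heq, zero_add]
    have hknk : nk ω (k+1) ≤ nk ω k := by
      simp only [hs, Set.mem_setOf_eq, not_lt] at hk
      exact hk
    have h1 : Qd ω (k+1) ≤ 2^(nk ω k) := by
      calc Qd ω (k+1) ≤ 2^(nk ω (k+1)) := nk_spec _
        _ ≤ 2^(nk ω k) := pow_le_pow_right₀ one_le_two hknk
    have h2 : Qd ω (k+1) ≤ 2 * Qd ω k := le_trans h1 (pow_nk_le hω k)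
    have h2R : (Qd ω (k+1) : ℝ) ≤ 2 * (Qd ω k : ℝ) := by exact_mod_cast h2
    rw [Tf, junk]
    have := QdR_pos hω k
    apply mul_le_mul_of_nonneg_left ?_ (by positivity)
    exact Real.log_le_log (QdR_pos hω (k+1)) h2R

lemma S2_of_T (hω : Irrational ω) (hT : Summable (Tf ω)) : Summable (S2 ω) := by
  set f : ℕ × ℕ → ℝ := fun p => (1/2:ℝ)^(nk ω p.1 + p.2) * Real.log (Qd ω (p.1+1) : ℝ) with hf
  have hfnn : ∀ p, 0 ≤ f p := by
    intro p
    simp only [hf]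
    exact mul_nonneg (by positivity) (logQd_nonneg hω (p.1+1))
  have hslicerw : ∀ k, (fun j => f (k, j)) =
      (fun j => ((1/2:ℝ)^(nk ω k) * Real.log (Qd ω (k+1) : ℝ)) * (1/2:ℝ)^j) := by
    intro k; funext j; simp only [hf, pow_add]; ring
  have hsumm : Summable f := by
    rw [summable_prod_of_nonneg hfnn]
    constructor
    · intro k
      rw [hslicerw k]
      exact summable_geometric_two.mul_left _
    · have htsum : ∀ k, (∑' j : ℕ, f (k, j)) =
          ((1/2:ℝ)^(nk ω k) * Real.log (Qd ω (k+1) : ℝ)) * 2 := by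
        intro k
        rw [show (fun j => f (k, j)) = fun j => f (k, j) from rfl]
        calc (∑' j : ℕ, f (k, j))
            = ∑' j : ℕ, ((1/2:ℝ)^(nk ω k) * Real.log (Qd ω (k+1) : ℝ)) * (1/2:ℝ)^j := by
              exact tsum_congr (fun j => congrFun (hslicerw k) j)
          _ = ((1/2:ℝ)^(nk ω k) * Real.log (Qd ω (k+1) : ℝ)) * ∑' j : ℕ, (1/2:ℝ)^j :=
              tsum_mul_left
          _ = ((1/2:ℝ)^(nk ω k) * Real.log (Qd ω (k+1) : ℝ)) * 2 := by
              rw [tsum_geometric_two]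
      refine Summable.of_nonneg_of_le (fun k => tsum_nonneg (fun j => hfnn (k, j)))
        (fun k => ?_) (hT.mul_left 2)
      rw [htsum k]
      have h1 := half_pow_nk_le hω k
      have h2 := logQd_nonneg hω (k+1)
      have h3 := Tf_nonneg hω k
      rw [Tf] at h3 ⊢
      nlinarith
  have einj : Function.Injective (fun n => ((Kn ω n, n - nk ω (Kn ω n)) : ℕ × ℕ)) := by
    intro n n' h
    simp only [Prod.mk.injEq] at h
    obtain ⟨h1, h2⟩ := h
    have ha := nk_Kn_le hω n
    have hb := nk_Kn_le hω n'
    rw [h1] at ha h2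
    omega
  have hcomp : S2 ω = f ∘ (fun n => ((Kn ω n, n - nk ω (Kn ω n)) : ℕ × ℕ)) := by
    funext n
    simp only [hf, S2, Function.comp]
    congr 2
    have := nk_Kn_le hω n
    omega
  rw [hcomp]
  exact hsumm.comp_injective einj

end summ

section final
variable {ω : ℝ}

lemma S1_bounds (hω : Irrational ω) (n : ℕ) :
    S2 ω n ≤ (1/2:ℝ)^n * Real.log (1 / alphaMin ω n) ∧
      (1/2:ℝ)^n * Real.log (1 / alphaMin ω n) ≤ S2 ω n + (1/2:ℝ)^n * Real.log 2 := by
  obtain ⟨hlo, hhi⟩ := alpha_bounds hω n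
  set Q' := (Qd ω (Kn ω n + 1) : ℝ) with hQ'
  have hQ'1 : 1 ≤ Q' := QdR_one_le hω _
  have hQ'0 : 0 < Q' := by linarith
  have hα0 : 0 < alphaMin ω n := lt_of_lt_of_le (by positivity) hlo
  have h1 : Q' ≤ 1 / alphaMin ω n := by
    rw [le_div_iff₀ hα0]
    calc Q' * alphaMin ω n ≤ Q' * (1/Q') := mul_le_mul_of_nonneg_left hhi hQ'0.le
      _ = 1 := mul_one_div_cancel (ne_of_gt hQ'0)
  have h2 : 1 / alphaMin ω n ≤ 2 * Q' := by
    rw [div_le_iff₀ hα0]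
    calc (1:ℝ) = (2*Q') * (1/(2*Q')) := by field_simp
      _ ≤ (2*Q') * alphaMin ω n := mul_le_mul_of_nonneg_left hlo (by positivity)
  constructor
  · exact mul_le_mul_of_nonneg_left (Real.log_le_log hQ'0 h1) (by positivity)
  · have h3 : Real.log (1/alphaMin ω n) ≤ Real.log (2*Q') :=
      Real.log_le_log (by positivity) h2
    have hl2 : Real.log (2*Q') = Real.log 2 + Real.log Q' :=
      Real.log_mul two_ne_zero (ne_of_gt hQ'0)
    have h4 : Real.log (1/alphaMin ω n) ≤ Real.log 2 + Real.log Q' := by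
      rw [← hl2]; exact h3
    have h5 : ((1:ℝ)/2)^n * Real.log (1/alphaMin ω n) ≤
        ((1:ℝ)/2)^n * (Real.log 2 + Real.log Q') :=
      mul_le_mul_of_nonneg_left h4 (by positivity)
    calc ((1:ℝ)/2)^n * Real.log (1/alphaMin ω n)
        ≤ ((1:ℝ)/2)^n * (Real.log 2 + Real.log Q') := h5
      _ = S2 ω n + ((1:ℝ)/2)^n * Real.log 2 := by rw [S2]; ring

end final

/-- Equivalence of the two formulations of the Bryuno condition:
`∑ₙ 2⁻ⁿ log(1/αₙ(ω)) < ∞` iff `∑ₖ (1/qₖ) log q_{k+1} < ∞`. -/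
theorem bryuno_condition_equivalence (ω : ℝ) (hω : Irrational ω) :
    (Summable fun n : ℕ => (1 / 2 : ℝ) ^ n * Real.log (1 / alphaMin ω n)) ↔
      Summable fun k : ℕ => 1 / cfDen ω k * Real.log (cfDen ω (k + 1)) := by
  have hrhs : (fun k : ℕ => 1 / cfDen ω k * Real.log (cfDen ω (k + 1))) = Tf ω := by
    funext k
    rw [Tf, cfDen, cfDen, ← (Qd_cast hω k).1, ← (Qd_cast hω (k+1)).1]
  rw [hrhs]
  have hmain : (Summable fun n : ℕ => (1 / 2 : ℝ) ^ n * Real.log (1 / alphaMin ω n)) ↔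
      Summable (S2 ω) := by
    constructor
    · intro h
      exact Summable.of_nonneg_of_le (S2_nonneg hω) (fun n => (S1_bounds hω n).1) h
    · intro h
      refine Summable.of_nonneg_of_le
        (fun n => le_trans (S2_nonneg hω n) (S1_bounds hω n).1)
        (fun n => (S1_bounds hω n).2) (h.add (summable_geometric_two.mul_right _))
  exact hmain.trans ⟨T_of_S2 hω, S2_of_T hω⟩
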